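/- Let OPT ⊆ P be a well-separated set with |OPT| = k whose unit balls cover at least r red and at least b blue points, let c_1, c_2, c_3 ∈ OPT be distinct, let q_i ∈ 𝓑(c_i) for i = 1, 2, 3, define P_1 = P and P_{i+1} = P_i ∖ 𝓕(q_i) for i = 1, 2, 3, let Guess = 𝓑(c_1) ∪ 𝓑(c_2) ∪ 𝓑(c_3), and let τ ∈ ℕ satisfy τ ≤ |Gain(c_i, q_i) ∩ P_i| for each i = 1, 2, 3. Then: (1) for every p ∈ OPT ∖ {c_1, c_2, c_3}, 𝓑(p) ⊆ P_4, and the union ∪_{p ∈ OPT ∖ {c_1,c_2,c_3}} 𝓑(p) contains at least b − |B ∩ Guess| blue points and at least r − |R ∩ Guess| red points; and (2) the three flowers 𝓕(q_1), 𝓕(q_2), 𝓕(q_3) are contained in P ∖ P_4 and their union contains at least |B ∩ Guess| blue points and at least |R ∩ Guess| + 3τ red points. -/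
import Mathlib


open scoped Classical

/-- The ball of radius `ρ` around `j` in a finite metric space. -/
noncomputable def bal {P : Type*} [Fintype P] [MetricSpace P] (j : P) (ρ : ℝ) : Finset P :=
  Finset.univ.filter fun i => dist i j ≤ ρ

/-- The flower centered at `j`. -/
noncomputable def flower {P : Type*} [Fintype P] [MetricSpace P] (j : P) : Finset P :=
  (bal j 1).biUnion fun i => bal i 1

/-- `Gain(p, q)`: the set of red points added to `𝓑(p)` by forming a flower centered at `q`. -/
noncomputable def gain {P : Type*} [Fintype P] [MetricSpace P] (R : Finset P) (p q : P) :
    Finset P :=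
  R ∩ (flower q \ bal p 1)

/-- A set `OPT` is well-separated if no ball of radius three covers two unit balls centered
at distinct points of `OPT`. -/
def WellSeparated {P : Type*} [Fintype P] [MetricSpace P] (OPT : Finset P) : Prop :=
  ¬ ∃ (q : P) (c c' : P), c ∈ OPT ∧ c' ∈ OPT ∧ c ≠ c' ∧ bal c 1 ∪ bal c' 1 ⊆ bal q 3

lemma mem_bal {P : Type*} [Fintype P] [MetricSpace P] {i j : P} {ρ : ℝ} :
    i ∈ bal j ρ ↔ dist i j ≤ ρ := by simp [bal]

lemma mem_flower {P : Type*} [Fintype P] [MetricSpace P] {x j : P} :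
    x ∈ flower j ↔ ∃ m, dist m j ≤ 1 ∧ dist x m ≤ 1 := by simp [flower, mem_bal]

lemma bal_subset_flower {P : Type*} [Fintype P] [MetricSpace P] {c q : P}
    (hq : q ∈ bal c 1) : bal c 1 ⊆ flower q := by
  intro y hy
  rw [mem_bal] at hy hq
  exact mem_flower.2 ⟨c, by rw [dist_comm]; exact hq, hy⟩

lemma disj_bal_flower {P : Type*} [Fintype P] [MetricSpace P] {OPT : Finset P}
    (hsep : WellSeparated OPT) {p c q : P} (hp : p ∈ OPT) (hc : c ∈ OPT) (hne : p ≠ c)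
    (hq : q ∈ bal c 1) : Disjoint (bal p 1) (flower q) := by
  rw [Finset.disjoint_left]
  intro x hxp hxf
  rw [mem_bal] at hxp hq
  obtain ⟨m, hmq, hxm⟩ := mem_flower.1 hxf
  apply hsep
  refine ⟨m, p, c, hp, hc, hne, ?_⟩
  intro y hy
  rw [Finset.mem_union, mem_bal, mem_bal] at hy
  rw [mem_bal]
  rcases hy with hy | hy
  · calc dist y m ≤ dist y p + dist p x + dist x m := dist_triangle4 y p x m
    _ ≤ 1 + 1 + 1 := by
        have : dist p x = dist x p := dist_comm p x
        linarith
    _ = 3 := by norm_num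
  · calc dist y m ≤ dist y c + dist c q + dist q m := dist_triangle4 y c q m
    _ ≤ 1 + 1 + 1 := by
        have h1 : dist c q = dist q c := dist_comm c q
        have h2 : dist q m ≤ 1 := by
          calc dist q m = dist m q := dist_comm q m
          _ ≤ 1 := hmq
        linarith
    _ = 3 := by norm_num

/-- the properties guaranteed by Phase I of the algorithm. -/
theorem stmt5 {P : Type*} [Fintype P] [MetricSpace P]
    (R B : Finset P) (hpart : ∀ p : P, (p ∈ R ∧ p ∉ B) ∨ (p ∈ B ∧ p ∉ R))
    (k r b : ℕ)
    (OPT : Finset P) (hsep : WellSeparated OPT) (hcard : OPT.card = k)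
    (hcovR : r ≤ (R ∩ OPT.biUnion fun p => bal p 1).card)
    (hcovB : b ≤ (B ∩ OPT.biUnion fun p => bal p 1).card)
    (c₁ c₂ c₃ : P) (hc₁ : c₁ ∈ OPT) (hc₂ : c₂ ∈ OPT) (hc₃ : c₃ ∈ OPT)
    (h12 : c₁ ≠ c₂) (h13 : c₁ ≠ c₃) (h23 : c₂ ≠ c₃)
    (q₁ q₂ q₃ : P) (hq₁ : q₁ ∈ bal c₁ 1) (hq₂ : q₂ ∈ bal c₂ 1) (hq₃ : q₃ ∈ bal c₃ 1)
    (P₁ P₂ P₃ P₄ : Finset P)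
    (hP₁ : P₁ = Finset.univ)
    (hP₂ : P₂ = P₁ \ flower q₁)
    (hP₃ : P₃ = P₂ \ flower q₂)
    (hP₄ : P₄ = P₃ \ flower q₃)
    (Guess : Finset P) (hGuess : Guess = bal c₁ 1 ∪ bal c₂ 1 ∪ bal c₃ 1)
    (τ : ℕ)
    (hτ₁ : τ ≤ (gain R c₁ q₁ ∩ P₁).card)
    (hτ₂ : τ ≤ (gain R c₂ q₂ ∩ P₂).card)
    (hτ₃ : τ ≤ (gain R c₃ q₃ ∩ P₃).card) :
    ((∀ p ∈ OPT \ {c₁, c₂, c₃}, bal p 1 ⊆ P₄) ∧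
      (b : ℤ) - ((B ∩ Guess).card : ℤ) ≤
        ((B ∩ (OPT \ {c₁, c₂, c₃}).biUnion fun p => bal p 1).card : ℤ) ∧
      (r : ℤ) - ((R ∩ Guess).card : ℤ) ≤
        ((R ∩ (OPT \ {c₁, c₂, c₃}).biUnion fun p => bal p 1).card : ℤ)) ∧
    ((flower q₁ ⊆ Finset.univ \ P₄ ∧ flower q₂ ⊆ Finset.univ \ P₄ ∧
        flower q₃ ⊆ Finset.univ \ P₄) ∧
      (B ∩ Guess).card ≤ (B ∩ (flower q₁ ∪ flower q₂ ∪ flower q₃)).card ∧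
      (R ∩ Guess).card + 3 * τ ≤ (R ∩ (flower q₁ ∪ flower q₂ ∪ flower q₃)).card) := by
  subst hP₁ hP₂ hP₃ hP₄ hGuess
  -- basic facts
  have hGF : bal c₁ 1 ∪ bal c₂ 1 ∪ bal c₃ 1 ⊆ flower q₁ ∪ flower q₂ ∪ flower q₃ := by
    intro x hx
    simp only [Finset.mem_union] at hx ⊢
    rcases hx with (h | h) | h
    · exact Or.inl (Or.inl (bal_subset_flower hq₁ h))
    · exact Or.inl (Or.inr (bal_subset_flower hq₂ h))
    · exact Or.inr (bal_subset_flower hq₃ h)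
  -- Part 1a
  have part1a : ∀ p ∈ OPT \ ({c₁, c₂, c₃} : Finset P),
      bal p 1 ⊆ ((Finset.univ \ flower q₁) \ flower q₂) \ flower q₃ := by
    intro p hp
    rw [Finset.mem_sdiff] at hp
    obtain ⟨hpO, hpn⟩ := hp
    simp only [Finset.mem_insert, Finset.mem_singleton, not_or] at hpn
    obtain ⟨hn1, hn2, hn3⟩ := hpn
    have d1 := disj_bal_flower hsep hpO hc₁ hn1 hq₁
    have d2 := disj_bal_flower hsep hpO hc₂ hn2 hq₂
    have d3 := disj_bal_flower hsep hpO hc₃ hn3 hq₃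
    intro x hx
    simp only [Finset.mem_sdiff, Finset.mem_univ, true_and]
    exact ⟨⟨Finset.disjoint_left.1 d1 hx, Finset.disjoint_left.1 d2 hx⟩,
      Finset.disjoint_left.1 d3 hx⟩
  -- union covering for counts
  have hcover : (OPT.biUnion fun p => bal p 1) ⊆
      (bal c₁ 1 ∪ bal c₂ 1 ∪ bal c₃ 1) ∪
        (OPT \ ({c₁, c₂, c₃} : Finset P)).biUnion fun p => bal p 1 := by
    intro x hx
    rw [Finset.mem_biUnion] at hx
    obtain ⟨p, hpO, hxp⟩ := hx
    by_cases hp : p ∈ ({c₁, c₂, c₃} : Finset P)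
    · refine Finset.mem_union_left _ ?_
      simp only [Finset.mem_insert, Finset.mem_singleton] at hp
      rcases hp with rfl | rfl | rfl
      · exact Finset.mem_union_left _ (Finset.mem_union_left _ hxp)
      · exact Finset.mem_union_left _ (Finset.mem_union_right _ hxp)
      · exact Finset.mem_union_right _ hxp
    · exact Finset.mem_union_right _
        (Finset.mem_biUnion.2 ⟨p, Finset.mem_sdiff.2 ⟨hpO, hp⟩, hxp⟩)
  have hcount : ∀ S : Finset P, (S ∩ OPT.biUnion fun p => bal p 1).card ≤
      (S ∩ (bal c₁ 1 ∪ bal c₂ 1 ∪ bal c₃ 1)).card +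
      (S ∩ (OPT \ ({c₁, c₂, c₃} : Finset P)).biUnion fun p => bal p 1).card := by
    intro S
    calc (S ∩ OPT.biUnion fun p => bal p 1).card
        ≤ ((S ∩ (bal c₁ 1 ∪ bal c₂ 1 ∪ bal c₃ 1)) ∪
            (S ∩ (OPT \ ({c₁, c₂, c₃} : Finset P)).biUnion fun p => bal p 1)).card := by
          apply Finset.card_le_card
          intro x hx
          rw [Finset.mem_inter] at hx
          rcases Finset.mem_union.1 (hcover hx.2) with h | h
          · exact Finset.mem_union_left _ (Finset.mem_inter.2 ⟨hx.1, h⟩)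
          · exact Finset.mem_union_right _ (Finset.mem_inter.2 ⟨hx.1, h⟩)
      _ ≤ _ := Finset.card_union_le _ _
  -- Part 2a
  have part2a : ∀ F : Finset P, F = flower q₁ ∨ F = flower q₂ ∨ F = flower q₃ →
      F ⊆ Finset.univ \ (((Finset.univ \ flower q₁) \ flower q₂) \ flower q₃) := by
    intro F hF x hx
    rw [Finset.mem_sdiff]
    refine ⟨Finset.mem_univ x, fun h => ?_⟩
    rw [Finset.mem_sdiff, Finset.mem_sdiff, Finset.mem_sdiff] at h
    rcases hF with rfl | rfl | rfl
    · exact h.1.1.2 hx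
    · exact h.1.2 hx
    · exact h.2 hx
  -- Part 2 red counting
  set G₁ := gain R c₁ q₁ ∩ Finset.univ with hG₁
  set G₂ := gain R c₂ q₂ ∩ (Finset.univ \ flower q₁) with hG₂
  set G₃ := gain R c₃ q₃ ∩ ((Finset.univ \ flower q₁) \ flower q₂) with hG₃
  have memG : ∀ x, (x ∈ G₁ → x ∈ R ∧ x ∈ flower q₁ ∧ x ∉ bal c₁ 1) ∧
      (x ∈ G₂ → x ∈ R ∧ x ∈ flower q₂ ∧ x ∉ bal c₂ 1 ∧ x ∉ flower q₁) ∧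
      (x ∈ G₃ → x ∈ R ∧ x ∈ flower q₃ ∧ x ∉ bal c₃ 1 ∧ x ∉ flower q₁ ∧ x ∉ flower q₂) := by
    intro x
    refine ⟨?_, ?_, ?_⟩ <;> intro h <;>
      simp only [hG₁, hG₂, hG₃, gain, Finset.mem_inter, Finset.mem_sdiff,
        Finset.mem_univ, true_and] at h <;> tauto
  have dA1 : Disjoint (R ∩ (bal c₁ 1 ∪ bal c₂ 1 ∪ bal c₃ 1)) G₁ := by
    rw [Finset.disjoint_left]
    intro x hx hx1
    obtain ⟨_, hf, hnb⟩ := (memG x).1 hx1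
    have hxG := (Finset.mem_inter.1 hx).2
    have d2 := disj_bal_flower hsep hc₂ hc₁ h12.symm hq₁
    have d3 := disj_bal_flower hsep hc₃ hc₁ h13.symm hq₁
    rcases Finset.mem_union.1 hxG with h | h
    · rcases Finset.mem_union.1 h with h | h
      · exact hnb h
      · exact Finset.disjoint_left.1 d2 h hf
    · exact Finset.disjoint_left.1 d3 h hf
  have dA2 : Disjoint (R ∩ (bal c₁ 1 ∪ bal c₂ 1 ∪ bal c₃ 1)) G₂ := by
    rw [Finset.disjoint_left]
    intro x hx hx2
    obtain ⟨_, hf, hnb, _⟩ := (memG x).2.1 hx2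
    have hxG := (Finset.mem_inter.1 hx).2
    have d1 := disj_bal_flower hsep hc₁ hc₂ h12 hq₂
    have d3 := disj_bal_flower hsep hc₃ hc₂ h23.symm hq₂
    rcases Finset.mem_union.1 hxG with h | h
    · rcases Finset.mem_union.1 h with h | h
      · exact Finset.disjoint_left.1 d1 h hf
      · exact hnb h
    · exact Finset.disjoint_left.1 d3 h hf
  have dA3 : Disjoint (R ∩ (bal c₁ 1 ∪ bal c₂ 1 ∪ bal c₃ 1)) G₃ := by
    rw [Finset.disjoint_left]
    intro x hx hx3
    obtain ⟨_, hf, hnb, _, _⟩ := (memG x).2.2 hx3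
    have hxG := (Finset.mem_inter.1 hx).2
    have d1 := disj_bal_flower hsep hc₁ hc₃ h13 hq₃
    have d2 := disj_bal_flower hsep hc₂ hc₃ h23 hq₃
    rcases Finset.mem_union.1 hxG with h | h
    · rcases Finset.mem_union.1 h with h | h
      · exact Finset.disjoint_left.1 d1 h hf
      · exact Finset.disjoint_left.1 d2 h hf
    · exact hnb h
  have d12 : Disjoint G₁ G₂ := by
    rw [Finset.disjoint_left]
    intro x hx1 hx2
    exact ((memG x).2.1 hx2).2.2.2 ((memG x).1 hx1).2.1
  have d13 : Disjoint G₁ G₃ := by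
    rw [Finset.disjoint_left]
    intro x hx1 hx3
    exact ((memG x).2.2 hx3).2.2.2.1 ((memG x).1 hx1).2.1
  have d23 : Disjoint G₂ G₃ := by
    rw [Finset.disjoint_left]
    intro x hx2 hx3
    exact ((memG x).2.2 hx3).2.2.2.2 ((memG x).2.1 hx2).2.1
  have hbig : R ∩ (bal c₁ 1 ∪ bal c₂ 1 ∪ bal c₃ 1) ∪ G₁ ∪ G₂ ∪ G₃ ⊆
      R ∩ (flower q₁ ∪ flower q₂ ∪ flower q₃) := by
    intro x hx
    rcases Finset.mem_union.1 hx with hx | hx3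
    · rcases Finset.mem_union.1 hx with hx | hx2
      · rcases Finset.mem_union.1 hx with hx | hx1
        · obtain ⟨hR, hG⟩ := Finset.mem_inter.1 hx
          exact Finset.mem_inter.2 ⟨hR, hGF hG⟩
        · obtain ⟨hR, hf, _⟩ := (memG x).1 hx1
          exact Finset.mem_inter.2 ⟨hR, Finset.mem_union_left _ (Finset.mem_union_left _ hf)⟩
      · obtain ⟨hR, hf, _, _⟩ := (memG x).2.1 hx2
        exact Finset.mem_inter.2 ⟨hR, Finset.mem_union_left _ (Finset.mem_union_right _ hf)⟩
    · obtain ⟨hR, hf, _, _, _⟩ := (memG x).2.2 hx3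
      exact Finset.mem_inter.2 ⟨hR, Finset.mem_union_right _ hf⟩
  have hcardbig : (R ∩ (bal c₁ 1 ∪ bal c₂ 1 ∪ bal c₃ 1)).card + G₁.card + G₂.card + G₃.card
      = (R ∩ (bal c₁ 1 ∪ bal c₂ 1 ∪ bal c₃ 1) ∪ G₁ ∪ G₂ ∪ G₃).card := by
    rw [Finset.card_union_of_disjoint, Finset.card_union_of_disjoint,
      Finset.card_union_of_disjoint]
    · exact dA1
    · exact Finset.disjoint_union_left.2 ⟨dA2, d12⟩
    · exact Finset.disjoint_union_left.2 ⟨Finset.disjoint_union_left.2 ⟨dA3, d13⟩, d23⟩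
  refine ⟨⟨part1a, ?_, ?_⟩, ⟨part2a _ (Or.inl rfl), part2a _ (Or.inr (Or.inl rfl)),
      part2a _ (Or.inr (Or.inr rfl))⟩, ?_, ?_⟩
  · have := hcount B
    have := hcovB
    push_cast
    omega
  · have := hcount R
    have := hcovR
    push_cast
    omega
  · apply Finset.card_le_card
    intro x hx
    obtain ⟨hB, hG⟩ := Finset.mem_inter.1 hx
    exact Finset.mem_inter.2 ⟨hB, hGF hG⟩
  · have hle := Finset.card_le_card hbig
    rw [← hcardbig] at hle
    omega
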